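/- arXiv:1612.07718 — 4 statements merged into one kernel-verified Lean document; each statement's English description precedes it below -/
import Mathlib

section
/- (Bell's inequality, classical-probability form) Let (Ω, F, P) be a probability space and let A₁, A₂, B₁, B₂ ∈ F be events. Define the coincidence event f(A,B) := (A ∩ B) ∪ (Aᶜ ∩ Bᶜ), where Aᶜ denotes the complement of A in Ω. Then P(f(A₁,B₁)) ≤ P(f(A₁,B₂)) + P(f(A₂,B₂)) + P(f(A₂,B₁)). -/
open MeasureTheory

/-- Bell's inequality in classical probability: with coincidence events
`f(A,B) = (A ∩ B) ∪ (Aᶜ ∩ Bᶜ)`, one has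
`P(f(A₁,B₁)) ≤ P(f(A₁,B₂)) + P(f(A₂,B₂)) + P(f(A₂,B₁))`. -/
theorem bell_inequality
    {Ω : Type*} [MeasurableSpace Ω] (P : Measure Ω) [IsProbabilityMeasure P]
    (A₁ A₂ B₁ B₂ : Set Ω)
    (hA₁ : MeasurableSet A₁) (hA₂ : MeasurableSet A₂)
    (hB₁ : MeasurableSet B₁) (hB₂ : MeasurableSet B₂) :
    P ((A₁ ∩ B₁) ∪ (A₁ᶜ ∩ B₁ᶜ)) ≤
      P ((A₁ ∩ B₂) ∪ (A₁ᶜ ∩ B₂ᶜ)) + P ((A₂ ∩ B₂) ∪ (A₂ᶜ ∩ B₂ᶜ)) +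
        P ((A₂ ∩ B₁) ∪ (A₂ᶜ ∩ B₁ᶜ)) := by
  have hsub : (A₁ ∩ B₁) ∪ (A₁ᶜ ∩ B₁ᶜ) ⊆
      ((A₁ ∩ B₂) ∪ (A₁ᶜ ∩ B₂ᶜ)) ∪ (((A₂ ∩ B₂) ∪ (A₂ᶜ ∩ B₂ᶜ)) ∪ ((A₂ ∩ B₁) ∪ (A₂ᶜ ∩ B₁ᶜ))) := by
    intro ω hω
    simp only [Set.mem_union, Set.mem_inter_iff, Set.mem_compl_iff] at *
    tauto
  calc P ((A₁ ∩ B₁) ∪ (A₁ᶜ ∩ B₁ᶜ)) ≤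
      P (((A₁ ∩ B₂) ∪ (A₁ᶜ ∩ B₂ᶜ)) ∪ (((A₂ ∩ B₂) ∪ (A₂ᶜ ∩ B₂ᶜ)) ∪ ((A₂ ∩ B₁) ∪ (A₂ᶜ ∩ B₁ᶜ)))) :=
        measure_mono hsub
    _ ≤ P ((A₁ ∩ B₂) ∪ (A₁ᶜ ∩ B₂ᶜ)) + P (((A₂ ∩ B₂) ∪ (A₂ᶜ ∩ B₂ᶜ)) ∪ ((A₂ ∩ B₁) ∪ (A₂ᶜ ∩ B₁ᶜ))) :=
        measure_union_le _ _
    _ ≤ P ((A₁ ∩ B₂) ∪ (A₁ᶜ ∩ B₂ᶜ)) + (P ((A₂ ∩ B₂) ∪ (A₂ᶜ ∩ B₂ᶜ)) + P ((A₂ ∩ B₁) ∪ (A₂ᶜ ∩ B₁ᶜ))) :=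
        add_le_add_right (measure_union_le _ _) _
    _ = _ := by ring
end

section
/- (Quantum violation of CHSH) Let σ₁, σ₂, σ₃ be the Pauli matrices, E(a) := a₁σ₁ + a₂σ₂ + a₃σ₃ for a ∈ ℝ³, and ψ := (1/√2)(e₀ ⊗ e₁ − e₁ ⊗ e₀) ∈ ℂ² ⊗ ℂ². Then (i) for all unit vectors a, b ∈ ℝ³, ⟨ψ, (E(a) ⊗ E(b)) ψ⟩ = −(a·b); and (ii) there exist unit vectors a, a', b, b' ∈ ℝ³ such that |⟨ψ, (E(a) ⊗ (E(b)+E(b')) + E(a') ⊗ (E(b)−E(b'))) ψ⟩| = |a·b + a·b' + a'·b − a'·b'| > 2. -/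
open Matrix Kronecker

noncomputable section

def pauli1 : Matrix (Fin 2) (Fin 2) ℂ := !![0, 1; 1, 0]
def pauli2 : Matrix (Fin 2) (Fin 2) ℂ := !![0, -Complex.I; Complex.I, 0]
def pauli3 : Matrix (Fin 2) (Fin 2) ℂ := !![1, 0; 0, -1]

/-- `E(a) = a₁σ₁ + a₂σ₂ + a₃σ₃` for `a ∈ ℝ³`. -/
def spinE (a₁ a₂ a₃ : ℝ) : Matrix (Fin 2) (Fin 2) ℂ :=
  (a₁ : ℂ) • pauli1 + (a₂ : ℂ) • pauli2 + (a₃ : ℂ) • pauli3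

/-- The singlet state `ψ = (1/√2)(e₀ ⊗ e₁ − e₁ ⊗ e₀)`. -/
def psiSinglet : Fin 2 × Fin 2 → ℂ := fun p =>
  if p = (0, 1) then ((1 / Real.sqrt 2 : ℝ) : ℂ)
  else if p = (1, 0) then (-(1 / Real.sqrt 2 : ℝ) : ℂ)
  else 0

lemma key (a₁ a₂ a₃ b₁ b₂ b₃ : ℝ) :
    star psiSinglet ⬝ᵥ ((spinE a₁ a₂ a₃ ⊗ₖ spinE b₁ b₂ b₃) *ᵥ psiSinglet)
      = ((-(a₁ * b₁ + a₂ * b₂ + a₃ * b₃) : ℝ) : ℂ) := by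
  have hs : ((Real.sqrt 2 : ℝ) : ℂ) * ((Real.sqrt 2 : ℝ) : ℂ) = 2 := by
    rw [← Complex.ofReal_mul, Real.mul_self_sqrt (by norm_num)]; norm_num
  simp only [dotProduct, mulVec, Fintype.sum_prod_type, Fin.sum_univ_two,
    psiSinglet, spinE, pauli1, pauli2, pauli3, kroneckerMap_apply, Matrix.add_apply,
    Matrix.smul_apply, Pi.star_apply, cons_val', cons_val_zero, cons_val_one, head_cons,
    head_fin_const, empty_val', cons_val_fin_one, smul_eq_mul]
  norm_num [Prod.ext_iff, Fin.ext_iff, star_trivial]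
  field_simp
  ring_nf
  have h0 : ((Real.sqrt 2 : ℝ) : ℂ) ≠ 0 := by
    simp [Real.sqrt_eq_zero']
  have h3 : ((Real.sqrt 2 : ℝ) : ℂ)^3 * ((Real.sqrt 2 : ℝ) : ℂ)⁻¹^5 * 2 = 1 := by
    field_simp
    linear_combination (-1 : ℂ) * hs
  rw [Complex.I_sq]
  linear_combination ((a₃:ℂ)*b₃ + (a₁:ℂ)*b₁ + (a₂:ℂ)*b₂) * hs


lemma spinE_add (b₁ b₂ b₃ c₁ c₂ c₃ : ℝ) :
    spinE b₁ b₂ b₃ + spinE c₁ c₂ c₃ = spinE (b₁+c₁) (b₂+c₂) (b₃+c₃) := by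
  unfold spinE; push_cast; module

lemma spinE_sub (b₁ b₂ b₃ c₁ c₂ c₃ : ℝ) :
    spinE b₁ b₂ b₃ - spinE c₁ c₂ c₃ = spinE (b₁-c₁) (b₂-c₂) (b₃-c₃) := by
  unfold spinE; push_cast; module

/-- Quantum violation of CHSH: (i) for unit vectors `a, b`,
`⟨ψ, (E(a) ⊗ E(b)) ψ⟩ = −a·b`; (ii) there are unit vectors `a, a', b, b'` for which
the CHSH expectation has absolute value `|a·b + a·b' + a'·b − a'·b'| > 2`. -/
theorem chsh_quantum_violation :
    (∀ a₁ a₂ a₃ b₁ b₂ b₃ : ℝ,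
      a₁ ^ 2 + a₂ ^ 2 + a₃ ^ 2 = 1 → b₁ ^ 2 + b₂ ^ 2 + b₃ ^ 2 = 1 →
      star psiSinglet ⬝ᵥ ((spinE a₁ a₂ a₃ ⊗ₖ spinE b₁ b₂ b₃) *ᵥ psiSinglet)
        = ((-(a₁ * b₁ + a₂ * b₂ + a₃ * b₃) : ℝ) : ℂ)) ∧
    ∃ a₁ a₂ a₃ a'₁ a'₂ a'₃ b₁ b₂ b₃ b'₁ b'₂ b'₃ : ℝ,
      a₁ ^ 2 + a₂ ^ 2 + a₃ ^ 2 = 1 ∧ a'₁ ^ 2 + a'₂ ^ 2 + a'₃ ^ 2 = 1 ∧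
      b₁ ^ 2 + b₂ ^ 2 + b₃ ^ 2 = 1 ∧ b'₁ ^ 2 + b'₂ ^ 2 + b'₃ ^ 2 = 1 ∧
      ‖(star psiSinglet ⬝ᵥ
          ((spinE a₁ a₂ a₃ ⊗ₖ (spinE b₁ b₂ b₃ + spinE b'₁ b'₂ b'₃)
            + spinE a'₁ a'₂ a'₃ ⊗ₖ (spinE b₁ b₂ b₃ - spinE b'₁ b'₂ b'₃)) *ᵥ psiSinglet))‖
        = |a₁ * b₁ + a₂ * b₂ + a₃ * b₃ + (a₁ * b'₁ + a₂ * b'₂ + a₃ * b'₃)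
            + (a'₁ * b₁ + a'₂ * b₂ + a'₃ * b₃) - (a'₁ * b'₁ + a'₂ * b'₂ + a'₃ * b'₃)| ∧
      (2 : ℝ) < |a₁ * b₁ + a₂ * b₂ + a₃ * b₃ + (a₁ * b'₁ + a₂ * b'₂ + a₃ * b'₃)
            + (a'₁ * b₁ + a'₂ * b₂ + a'₃ * b₃) - (a'₁ * b'₁ + a'₂ * b'₂ + a'₃ * b'₃)| := by
  refine ⟨fun a₁ a₂ a₃ b₁ b₂ b₃ _ _ => key a₁ a₂ a₃ b₁ b₂ b₃, ?_⟩
  have hs2 : Real.sqrt 2 ^ 2 = 2 := Real.sq_sqrt (by norm_num)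
  have hspos : 0 < Real.sqrt 2 := Real.sqrt_pos.mpr (by norm_num)
  refine ⟨1, 0, 0, 0, 0, 1, -(1/Real.sqrt 2), 0, -(1/Real.sqrt 2),
    -(1/Real.sqrt 2), 0, 1/Real.sqrt 2, by norm_num, by norm_num, ?_, ?_, ?_, ?_⟩
  · field_simp
    norm_num [hs2]
  · field_simp
    norm_num [hs2]
  · rw [spinE_add, spinE_sub, add_mulVec, dotProduct_add, key, key]
    have hinv : 1 / Real.sqrt 2 = Real.sqrt 2 / 2 := by
      rw [div_eq_div_iff (ne_of_gt hspos) (by norm_num), one_mul]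
      nlinarith [hs2]
    rw [← Complex.ofReal_add, Complex.norm_real, Real.norm_eq_abs, abs_eq_abs]
    right; rw [hinv]; ring
  · have h : |(1:ℝ) * -(1/Real.sqrt 2) + 0*0 + 0*(-(1/Real.sqrt 2))
        + (1 * -(1/Real.sqrt 2) + 0*0 + 0*(1/Real.sqrt 2))
        + (0 * -(1/Real.sqrt 2) + 0*0 + 1*(-(1/Real.sqrt 2)))
        - (0 * -(1/Real.sqrt 2) + 0*0 + 1*(1/Real.sqrt 2))| = 2 * Real.sqrt 2 := by
      have hinv : 1 / Real.sqrt 2 = Real.sqrt 2 / 2 := by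
        rw [div_eq_div_iff (ne_of_gt hspos) (by norm_num), one_mul]
        nlinarith [hs2]
      rw [hinv]
      rw [show (1:ℝ) * -(Real.sqrt 2/2) + 0*0 + 0*(-(Real.sqrt 2/2))
        + (1 * -(Real.sqrt 2/2) + 0*0 + 0*(Real.sqrt 2/2))
        + (0 * -(Real.sqrt 2/2) + 0*0 + 1*(-(Real.sqrt 2/2)))
        - (0 * -(Real.sqrt 2/2) + 0*0 + 1*(Real.sqrt 2/2)) = -(2*Real.sqrt 2) by ring]
      rw [abs_neg, abs_of_pos (by positivity)]
    rw [h]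
    nlinarith [hs2, hspos]


end
end

section
/- (Open-chain eigenvectors via the transcendental equation) Fix N ≥ 2, λ ∈ ℝ, and k ∈ ℝ satisfying sin(kN) = λ sin(k(N+1)). Let M ∈ M_N(ℝ) be the matrix with entries M_{jj} = 1 + λ² for 1 ≤ j ≤ N−1, M_{NN} = λ², M_{j,j+1} = M_{j+1,j} = −λ for 1 ≤ j ≤ N−1, and all other entries 0. Let Ψ ∈ ℝᴺ be the vector with components Ψ_l = sin(k l), l = 1,…,N. Then M Ψ = (1 + λ² − 2λ cos k) Ψ. -/
open Matrix

noncomputable section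

/-- The matrix `(1/4)(A+B)(A−B)` of the open transverse-field Ising chain:
diagonal `1 + λ²` except the last entry `λ²`, sub/super-diagonal `−λ`.
(Rows and columns are indexed by `Fin N`, site `l` being index `l−1`.) -/
def isingOpenM (N : ℕ) (lam : ℝ) : Matrix (Fin N) (Fin N) ℝ :=
  Matrix.of fun j j' =>
    (if j = j' then (if (j : ℕ) = N - 1 then lam ^ 2 else 1 + lam ^ 2) else 0)
    + (if (j' : ℕ) = (j : ℕ) + 1 then -lam else 0)
    + (if (j : ℕ) = (j' : ℕ) + 1 then -lam else 0)

lemma sum_ite_val {N : ℕ} (m : ℕ) (g : Fin N → ℝ) :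
    ∑ j' : Fin N, (if (j' : ℕ) = m then g j' else 0) =
    if h : m < N then g ⟨m, h⟩ else 0 := by
  split_ifs with h
  · rw [Finset.sum_eq_single (⟨m, h⟩ : Fin N)]
    · simp
    · intro b _ hb; rw [if_neg]; intro hc; exact hb (Fin.ext hc)
    · simp
  · apply Finset.sum_eq_zero; intro x _
    rw [if_neg]; intro hc; exact h (hc ▸ x.isLt)

lemma sum_ite_val' {N : ℕ} (m : ℕ) (g : Fin N → ℝ) :
    ∑ j' : Fin N, (if m = (j' : ℕ) + 1 then g j' else 0) =
    if h : m - 1 < N ∧ 1 ≤ m then g ⟨m - 1, h.1⟩ else 0 := by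
  split_ifs with h
  · rw [Finset.sum_eq_single (⟨m - 1, h.1⟩ : Fin N)]
    · simp; omega
    · intro b _ hb; rw [if_neg]; intro hc; apply hb; apply Fin.ext; simp; omega
    · simp
  · apply Finset.sum_eq_zero; intro x _
    rw [if_neg]; intro hc; apply h; constructor <;> omega

/-- Open-chain eigenvectors: if `sin(kN) = λ sin(k(N+1))`, then `Ψ_l = sin(k l)` is an
eigenvector of `(1/4)(A+B)(A−B)` with eigenvalue `1 + λ² − 2λ cos k`. -/
theorem ising_open_eigenvector {N : ℕ} (hN : 2 ≤ N) (lam k : ℝ)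
    (hk : Real.sin (k * N) = lam * Real.sin (k * (N + 1))) :
    let Ψ : Fin N → ℝ := fun l => Real.sin (k * ((l : ℕ) + 1))
    isingOpenM N lam *ᵥ Ψ = (1 + lam ^ 2 - 2 * lam * Real.cos k) • Ψ := by

  intro Ψ
  funext j
  simp only [isingOpenM, mulVec, dotProduct, Matrix.of_apply, add_mul, ite_mul, zero_mul,
    Finset.sum_add_distrib, Pi.smul_apply, smul_eq_mul]
  rw [Finset.sum_ite_eq Finset.univ j, sum_ite_val, sum_ite_val']
  simp only [Finset.mem_univ, if_true]
  obtain ⟨n, hn⟩ := j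
  simp only [Ψ, Fin.val_mk]
  split_ifs with h1 h2 h3 h3 h2 h3 h3
  all_goals try omega
  · -- n = N - 1 : boundary row, uses hk
    have h4 : n - 1 = N - 2 := by omega
    have hcn : (n : ℝ) = (N : ℝ) - 1 := by
      subst h1; rw [Nat.cast_sub (by omega)]; simp
    have hcn' : ((n - 1 : ℕ) : ℝ) = (N : ℝ) - 2 := by
      rw [h4, Nat.cast_sub (by omega)]; simp
    rw [hcn, hcn', show k * ((N : ℝ) - 1 + 1) = k * N by ring,
      show k * ((N : ℝ) - 2 + 1) = k * N - k by ring, Real.sin_sub]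
    rw [show k * ((N : ℝ) + 1) = k * N + k by ring, Real.sin_add] at hk
    linear_combination -hk
  · -- interior row
    rw [Nat.cast_sub h3.2, Nat.cast_add, Nat.cast_one]
    rw [show k * ((n : ℝ) + 1 + 1) = k * ((n : ℝ) + 1) + k by ring,
      show k * ((n : ℝ) - 1 + 1) = k * ((n : ℝ) + 1) - k by ring,
      Real.sin_add, Real.sin_sub]
    ring
  · -- first row
    have h0 : n = 0 := by omega
    subst h0
    push_cast
    rw [show k * ((1 : ℝ) + 1) = 2 * k by ring, Real.sin_two_mul]
    ring

end
end

section
/- (Invariance of the Chern–Connes pairing with idempotents) Let A be an associative ℂ-algebra and let τ : A × A × A → ℂ be a trilinear map satisfying (cyclicity) τ(a₀, a₁, a₂) = τ(a₂, a₀, a₁) for all a₀, a₁, a₂ ∈ A, and (the Hochschild cocycle condition) τ(a₀a₁, a₂, a₃) − τ(a₀, a₁a₂, a₃) + τ(a₀, a₁, a₂a₃) − τ(a₃a₀, a₁, a₂) = 0 for all a₀, a₁, a₂, a₃ ∈ A. Then for every idempotent e ∈ A (e² = e) and every x ∈ A, τ(xe − ex, e, e) = 0. Consequently, if t ↦ e_t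 is a differentiable family of idempotents with ė_t = [x_t, e_t], then t ↦ τ(e_t, e_t, e_t) is constant. -/
set_option maxHeartbeats 1000000
set_option synthInstance.maxHeartbeats 1000000

section Aux

variable {A : Type*} [NonUnitalNormedRing A] [NormedSpace ℂ A]
    [SMulCommClass ℂ A A] [IsScalarTower ℂ A A]

/-- Restriction of scalars for `A →L[ℂ] ℂ`. -/
noncomputable def CCPaux.r1 : (A →L[ℂ] ℂ) →L[ℝ] (A →L[ℝ] ℂ) :=
  ContinuousLinearMap.restrictScalarsL ℂ A ℂ ℝ ℝ

/-- Restriction of scalars for `A →L[ℂ] A →L[ℂ] ℂ`. -/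
noncomputable def CCPaux.r2 : (A →L[ℂ] A →L[ℂ] ℂ) →L[ℝ] (A →L[ℝ] A →L[ℝ] ℂ) :=
  (ContinuousLinearMap.compL ℝ A (A →L[ℂ] ℂ) (A →L[ℝ] ℂ) CCPaux.r1).comp
    (ContinuousLinearMap.restrictScalarsL ℂ A (A →L[ℂ] ℂ) ℝ ℝ)

/-- The ℝ-trilinear continuous map underlying a ℂ-trilinear one. -/
noncomputable def CCPaux.τℝ (τ : A →L[ℂ] A →L[ℂ] A →L[ℂ] ℂ) :
    A →L[ℝ] A →L[ℝ] A →L[ℝ] ℂ :=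
  ContinuousLinearMap.compL ℝ A (A →L[ℂ] A →L[ℂ] ℂ) (A →L[ℝ] A →L[ℝ] ℂ) CCPaux.r2
    (ContinuousLinearMap.restrictScalarsL ℂ A (A →L[ℂ] A →L[ℂ] ℂ) ℝ ℝ τ)

lemma CCPaux.τℝ_apply (τ : A →L[ℂ] A →L[ℂ] A →L[ℂ] ℂ) (a b c : A) :
    CCPaux.τℝ τ a b c = τ a b c := rfl

end Aux

/-- Invariance of the Chern–Connes pairing with idempotents: if `τ` is a cyclic
2-cocycle on an associative ℂ-algebra `A` (cyclic and satisfying the Hochschild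
cocycle condition), then `τ(xe − ex, e, e) = 0` for every idempotent `e` and every
`x`; consequently, for a differentiable family of idempotents `e_t` with
`ė_t = [x_t, e_t]`, the pairing `τ(e_t, e_t, e_t)` is constant in `t`. -/
theorem cyclic_cocycle_idempotent_pairing_invariant
    {A : Type*} [NonUnitalNormedRing A] [NormedSpace ℂ A]
    [SMulCommClass ℂ A A] [IsScalarTower ℂ A A]
    (τ : A →L[ℂ] A →L[ℂ] A →L[ℂ] ℂ)
    (hcyc : ∀ a₀ a₁ a₂ : A, τ a₀ a₁ a₂ = τ a₂ a₀ a₁)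
    (hcoc : ∀ a₀ a₁ a₂ a₃ : A,
      τ (a₀ * a₁) a₂ a₃ - τ a₀ (a₁ * a₂) a₃ + τ a₀ a₁ (a₂ * a₃) - τ (a₃ * a₀) a₁ a₂ = 0) :
    (∀ e x : A, e * e = e → τ (x * e - e * x) e e = 0) ∧
      ∀ e x : ℝ → A, (∀ t, e t * e t = e t) →
        (∀ t, HasDerivAt e (x t * e t - e t * x t) t) →
        ∀ s t : ℝ, τ (e s) (e s) (e s) = τ (e t) (e t) (e t) := by
  have key : ∀ e x : A, e * e = e → τ (x * e - e * x) e e = 0 := by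
    intro e x he
    set a := x * e - e * x with ha
    have hae : e * (a * e) = 0 := by
      simp only [ha, mul_sub, sub_mul, ← mul_assoc, he]
      rw [mul_assoc (e * x) e e, he, sub_self]
    -- cocycle at (a*e, e, e, e) gives τ(a*e, e, e) = τ(e*(a*e), e, e) = 0
    have h1 := hcoc (a * e) e e e
    rw [mul_assoc, he, hae, show τ (0 : A) = 0 from map_zero τ] at h1
    simp only [ContinuousLinearMap.zero_apply] at h1
    have hu : τ (a * e) e e = 0 := by linear_combination h1
    -- cocycle at (a, e, e, e) gives τ(a*e, e, e) = τ(e*a, e, e)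
    have h2 := hcoc a e e e
    rw [he] at h2
    have hv : τ (e * a) e e = 0 := by linear_combination hu - h2
    -- a = a*e + e*a
    have haea : a = a * e + e * a := by
      simp only [ha, mul_sub, sub_mul, ← mul_assoc, he]
      rw [mul_assoc x e e, he]
      abel
    calc τ a e e = τ (a * e + e * a) e e := by rw [← haea]
      _ = τ (a * e) e e + τ (e * a) e e := by
          rw [map_add, ContinuousLinearMap.add_apply, ContinuousLinearMap.add_apply]
      _ = 0 := by rw [hu, hv, add_zero]
  refine ⟨key, ?_⟩
  intro e x hid hder s t
  set T := CCPaux.τℝ τ with hT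
  have hTapp : ∀ a b c : A, T a b c = τ a b c := fun a b c => rfl
  have hderiv : ∀ u : ℝ, HasDerivAt (fun r => T (e r) (e r) (e r)) 0 u := by
    intro u
    set d := fun r => x r * e r - e r * x r with hd
    have hbb : IsBoundedBilinearMap ℝ fun p : A × A => T p.1 p.2 :=
      T.isBoundedBilinearMap
    have hpe : HasDerivAt (fun r => (e r, e r)) (d u, d u) u := (hder u).prodMk (hder u)
    have hb : HasDerivAt (fun r => T (e r) (e r))
        (hbb.deriv (e u, e u) (d u, d u)) u := by
      simpa [Function.comp_def] using
        (hbb.hasFDerivAt (e u, e u)).comp_hasDerivAt u hpe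
    rw [hbb.deriv_apply] at hb
    have h3 := hb.clm_apply (hder u)
    simp only [ContinuousLinearMap.add_apply] at h3
    have hz : T (e u) (d u) (e u) + T (d u) (e u) (e u) + T (e u) (e u) (d u) = 0 := by
      rw [hTapp, hTapp, hTapp]
      have c1 : τ (e u) (d u) (e u) = τ (d u) (e u) (e u) := by
        rw [hcyc (e u) (d u) (e u), hcyc (e u) (e u) (d u)]
      have c2 : τ (e u) (e u) (d u) = τ (d u) (e u) (e u) := hcyc (e u) (e u) (d u)
      have k := key (e u) (x u) (hid u)
      rw [c1, c2]
      simp only [hd]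
      rw [k]; ring
    rw [show (0 : ℂ) =
        T (e u) (d u) (e u) + T (d u) (e u) (e u) + T (e u) (e u) (d u) from hz.symm]
    exact h3
  have hdiff : Differentiable ℝ (fun r => T (e r) (e r) (e r)) :=
    fun u => (hderiv u).differentiableAt
  have hdz : ∀ u, deriv (fun r => T (e r) (e r) (e r)) u = 0 :=
    fun u => (hderiv u).deriv
  have := is_const_of_deriv_eq_zero hdiff hdz s t
  rwa [hTapp, hTapp] at this
end
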